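/- For every n ≥ 4, the Lagrangian of the star S_n satisfies λ(S_n) = 9(n−2)(n−3)/(512(n−1)²); consequently λ(S_n) → 9/512 as n → ∞. -/

import Mathlib

open Finset

/-- The Lagrangian of a hypergraph `G` with vertex set `[n] = {1, …, n}`. -/
noncomputable def lagN (n : ℕ) (G : Finset (Finset ℕ)) : ℝ :=
  sSup {v : ℝ | ∃ x : ℕ → ℝ, (∀ i, 0 ≤ x i) ∧ (∑ i ∈ Finset.Icc 1 n, x i) = 1 ∧
    v = ∑ e ∈ G, ∏ i ∈ e, x i}

/-- The star `S_n`: all 4-element subsets of `[n]` containing the vertex `1`. -/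
def starS (n : ℕ) : Finset (Finset ℕ) :=
  ((Finset.Icc 1 n).powersetCard 4).filter (fun e => 1 ∈ e)


lemma esymm_insert (S : Finset ℕ) (a : ℕ) (ha : a ∉ S) (k : ℕ) (y : ℕ → ℝ) :
    ∑ A ∈ (insert a S).powersetCard (k+1), ∏ i ∈ A, y i
      = ∑ A ∈ S.powersetCard (k+1), ∏ i ∈ A, y i
        + y a * ∑ A ∈ S.powersetCard k, ∏ i ∈ A, y i := by
  rw [Finset.powersetCard_succ_insert ha, Finset.sum_union, Finset.sum_image, Finset.mul_sum]
  · congr 1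
    refine Finset.sum_congr rfl fun A hA => ?_
    rw [Finset.prod_insert]
    intro haA
    exact ha ((Finset.mem_powersetCard.1 hA).1 haA)
  · intro A hA B hB hAB
    have hA' := (Finset.mem_powersetCard.1 hA).1
    have hB' := (Finset.mem_powersetCard.1 hB).1
    have : (insert a A).erase a = (insert a B).erase a := by rw [hAB]
    rwa [Finset.erase_insert (fun h => ha (hA' h)),
      Finset.erase_insert (fun h => ha (hB' h))] at this
  · rw [Finset.disjoint_right]
    intro A hA hA'
    simp only [Finset.mem_image] at hA
    obtain ⟨B, hB, rfl⟩ := hA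
    exact ha ((Finset.mem_powersetCard.1 hA').1 (Finset.mem_insert_self a B))

lemma esymm_one (S : Finset ℕ) (y : ℕ → ℝ) :
    ∑ A ∈ S.powersetCard 1, ∏ i ∈ A, y i = ∑ i ∈ S, y i := by
  induction S using Finset.induction_on with
  | empty => rw [Finset.powersetCard_eq_empty.2 (by simp)]; simp
  | insert _ _ ha ih =>
    rw [esymm_insert _ _ ha, ih, Finset.sum_insert ha, Finset.powersetCard_zero]
    simp [add_comm]

lemma sq_sum_id (S : Finset ℕ) (y : ℕ → ℝ) :
    (∑ i ∈ S, y i)^2 = ∑ i ∈ S, (y i)^2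
      + 2 * ∑ A ∈ S.powersetCard 2, ∏ i ∈ A, y i := by
  induction S using Finset.induction_on with
  | empty => rw [Finset.powersetCard_eq_empty.2 (by simp)]; simp
  | @insert a S ha ih =>
    rw [esymm_insert _ _ ha, esymm_one, Finset.sum_insert ha, Finset.sum_insert ha]
    linear_combination ih

lemma cube_sum_id (S : Finset ℕ) (y : ℕ → ℝ) :
    (∑ i ∈ S, y i)^3 = ∑ i ∈ S, (y i)^3
      + 3 * ∑ i ∈ S, (y i)^2 * ∑ j ∈ S.erase i, y j
      + 6 * ∑ A ∈ S.powersetCard 3, ∏ i ∈ A, y i := by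
  induction S using Finset.induction_on with
  | empty => rw [Finset.powersetCard_eq_empty.2 (by simp)]; simp
  | @insert a S ha ih =>
    have hQ : ∑ i ∈ insert a S, (y i)^2 * ∑ j ∈ (insert a S).erase i, y j
        = (y a)^2 * ∑ j ∈ S, y j + (y a * ∑ i ∈ S, (y i)^2
          + ∑ i ∈ S, (y i)^2 * ∑ j ∈ S.erase i, y j) := by
      rw [Finset.sum_insert ha, Finset.erase_insert ha]
      congr 1
      rw [Finset.mul_sum, ← Finset.sum_add_distrib]
      refine Finset.sum_congr rfl fun i hi => ?_
      rw [Finset.erase_insert_of_ne (ne_of_mem_of_not_mem hi ha).symm,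
        Finset.sum_insert (fun h => ha (Finset.mem_of_mem_erase h))]
      ring
    rw [esymm_insert _ _ ha, Finset.sum_insert ha, Finset.sum_insert ha, hQ]
    have hsq := sq_sum_id S y
    linear_combination ih + 3 * y a * hsq

lemma card_filter_mem3 (S : Finset ℕ) (i : ℕ) (hi : i ∈ S) :
    ((S.powersetCard 3).filter (fun A => i ∈ A)).card = (S.card - 1).choose 2 := by
  have : ((S.powersetCard 3).filter (fun A => i ∈ A)).card
      = ((S.erase i).powersetCard 2).card := by
    refine Finset.card_nbij' (fun A => A.erase i) (fun B => insert i B) ?_ ?_ ?_ ?_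
    · intro A hA
      simp only [Finset.mem_coe, Finset.mem_filter, Finset.mem_powersetCard] at hA ⊢
      obtain ⟨⟨hsub, hcard⟩, hiA⟩ := hA
      refine ⟨fun j hj => Finset.mem_erase.2 ⟨(Finset.mem_erase.1 hj).1, hsub (Finset.mem_of_mem_erase hj)⟩, ?_⟩
      rw [Finset.card_erase_of_mem hiA, hcard]
    · intro B hB
      simp only [Finset.mem_coe, Finset.mem_powersetCard] at hB ⊢
      obtain ⟨hsub, hcard⟩ := hB
      have hiB : i ∉ B := fun h => (Finset.mem_erase.1 (hsub h)).1 rfl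
      simp only [Finset.mem_coe, Finset.mem_filter, Finset.mem_powersetCard]
      exact ⟨⟨Finset.insert_subset hi (hsub.trans (Finset.erase_subset _ _)),
        by rw [Finset.card_insert_of_notMem hiB, hcard]⟩, Finset.mem_insert_self _ _⟩
    · intro A hA
      simp only [Finset.mem_coe, Finset.mem_filter] at hA
      exact Finset.insert_erase hA.2
    · intro B hB
      simp only [Finset.mem_coe, Finset.mem_powersetCard] at hB
      exact Finset.erase_insert (fun h => (Finset.mem_erase.1 (hB.1 h)).1 rfl)
  rw [this, Finset.card_powersetCard, Finset.card_erase_of_mem hi]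

lemma card_filter_mem3' (S : Finset ℕ) (i j : ℕ) (hi : i ∈ S) (hj : j ∈ S) (hij : j ≠ i) :
    ((S.powersetCard 3).filter (fun A => i ∈ A ∧ j ∈ A)).card = S.card - 2 := by
  have : ((S.powersetCard 3).filter (fun A => i ∈ A ∧ j ∈ A)).card
      = (((S.erase i).erase j).powersetCard 1).card := by
    refine Finset.card_nbij' (fun A => (A.erase i).erase j) (fun B => insert i (insert j B)) ?_ ?_ ?_ ?_
    · intro A hA
      simp only [Finset.mem_coe, Finset.mem_filter, Finset.mem_powersetCard] at hA ⊢
      obtain ⟨⟨hsub, hcard⟩, hiA, hjA⟩ := hA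
      constructor
      · intro k hk
        simp only [Finset.mem_erase] at hk ⊢
        exact ⟨hk.1, hk.2.1, hsub hk.2.2⟩
      · rw [Finset.card_erase_of_mem (Finset.mem_erase.2 ⟨hij, hjA⟩),
          Finset.card_erase_of_mem hiA, hcard]
    · intro B hB
      simp only [Finset.mem_coe, Finset.mem_powersetCard] at hB ⊢
      obtain ⟨hsub, hcard⟩ := hB
      have h1 : ∀ k ∈ B, k ≠ j ∧ k ≠ i ∧ k ∈ S := by
        intro k hk
        have := hsub hk
        simp only [Finset.mem_erase] at this
        exact ⟨this.1, this.2.1, this.2.2⟩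
      have hiB : i ∉ B := fun h => (h1 i h).2.1 rfl
      have hjB : j ∉ B := fun h => (h1 j h).1 rfl
      simp only [Finset.mem_coe, Finset.mem_filter, Finset.mem_powersetCard]
      refine ⟨⟨?_, ?_⟩, Finset.mem_insert_self _ _, Finset.mem_insert_of_mem (Finset.mem_insert_self _ _)⟩
      · refine Finset.insert_subset hi (Finset.insert_subset hj (fun k hk => (h1 k hk).2.2))
      · rw [Finset.card_insert_of_notMem, Finset.card_insert_of_notMem hjB, hcard]
        simp only [Finset.mem_insert]
        rintro (h | h)
        · exact hij h.symm
        · exact hiB h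
    · intro A hA
      simp only [Finset.mem_coe, Finset.mem_filter] at hA
      show insert i (insert j ((A.erase i).erase j)) = A
      rw [Finset.insert_erase (Finset.mem_erase.2 ⟨hij, hA.2.2⟩), Finset.insert_erase hA.2.1]
    · intro B hB
      simp only [Finset.mem_coe, Finset.mem_powersetCard] at hB
      have h1 : ∀ k ∈ B, k ≠ j ∧ k ≠ i := by
        intro k hk
        have := hB.1 hk
        simp only [Finset.mem_erase] at this
        exact ⟨this.1, this.2.1⟩
      have hiB : i ∉ B := fun h => (h1 i h).2 rfl
      have hjB : j ∉ B := fun h => (h1 j h).1 rfl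
      show ((insert i (insert j B)).erase i).erase j = B
      rw [Finset.erase_insert (by simp [hiB, Ne.symm hij]), Finset.erase_insert hjB]
  rw [this, Finset.card_powersetCard, Nat.choose_one_right,
    Finset.card_erase_of_mem (Finset.mem_erase.2 ⟨hij, hj⟩), Finset.card_erase_of_mem hi]
  omega

lemma swap1 (S : Finset ℕ) (g : ℕ → ℝ) :
    ∑ A ∈ S.powersetCard 3, ∑ i ∈ A, g i
      = ((S.card - 1).choose 2 : ℝ) * ∑ i ∈ S, g i := by
  have h1 : ∀ A ∈ S.powersetCard 3, ∑ i ∈ A, g i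
      = ∑ i ∈ S, if i ∈ A then g i else 0 := by
    intro A hA
    rw [Finset.sum_ite_mem, Finset.inter_eq_right.2 (Finset.mem_powersetCard.1 hA).1]
  rw [Finset.sum_congr rfl h1, Finset.sum_comm, Finset.mul_sum]
  refine Finset.sum_congr rfl fun i hi => ?_
  rw [← Finset.sum_filter, Finset.sum_const, card_filter_mem3 S i hi, nsmul_eq_mul]

lemma swap2 (S : Finset ℕ) (y : ℕ → ℝ) :
    ∑ A ∈ S.powersetCard 3, ∑ i ∈ A, ∑ j ∈ A.erase i, (y i)^2 * y j
      = ((S.card - 2 : ℕ) : ℝ) * ∑ i ∈ S, (y i)^2 * ∑ j ∈ S.erase i, y j := by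
  have h1 : ∀ A ∈ S.powersetCard 3, ∑ i ∈ A, ∑ j ∈ A.erase i, (y i)^2 * y j
      = ∑ i ∈ S, ∑ j ∈ S.erase i, if i ∈ A ∧ j ∈ A then (y i)^2 * y j else 0 := by
    intro A hA
    have hsub := (Finset.mem_powersetCard.1 hA).1
    have h2 : ∀ i, i ∈ A → ∑ j ∈ A.erase i, (y i)^2 * y j
        = ∑ j ∈ S.erase i, if j ∈ A then (y i)^2 * y j else 0 := by
      intro i hiA
      rw [Finset.sum_ite_mem]
      congr 1
      ext j
      simp only [Finset.mem_inter, Finset.mem_erase]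
      have := @hsub j
      tauto
    calc ∑ i ∈ A, ∑ j ∈ A.erase i, (y i)^2 * y j
        = ∑ i ∈ S, if i ∈ A then ∑ j ∈ A.erase i, (y i)^2 * y j else 0 := by
          rw [Finset.sum_ite_mem, Finset.inter_eq_right.2 hsub]
      _ = ∑ i ∈ S, ∑ j ∈ S.erase i, if i ∈ A ∧ j ∈ A then (y i)^2 * y j else 0 := by
          refine Finset.sum_congr rfl fun i _ => ?_
          by_cases hiA : i ∈ A
          · rw [if_pos hiA, h2 i hiA]
            refine Finset.sum_congr rfl fun j _ => ?_
            simp [hiA]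
          · rw [if_neg hiA]
            refine (Finset.sum_eq_zero fun j _ => ?_).symm
            simp [hiA]
  rw [Finset.sum_congr rfl h1, Finset.sum_comm, Finset.mul_sum]
  refine Finset.sum_congr rfl fun i hi => ?_
  rw [Finset.sum_comm, Finset.mul_sum, Finset.mul_sum]
  refine Finset.sum_congr rfl fun j hj => ?_
  rw [← Finset.sum_filter, Finset.sum_const,
    card_filter_mem3' S i j hi (Finset.mem_of_mem_erase hj) (Finset.mem_erase.1 hj).1,
    nsmul_eq_mul]

lemma perA1 (A : Finset ℕ) (y : ℕ → ℝ) (hy : ∀ i, 0 ≤ y i) (hA : A.card = 3) :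
    3 * ∏ i ∈ A, y i ≤ ∑ i ∈ A, (y i)^3 := by
  obtain ⟨a, b, c, hab, hac, hbc, rfl⟩ := Finset.card_eq_three.1 hA
  simp only [Finset.prod_insert, Finset.sum_insert, Finset.mem_insert, Finset.mem_singleton,
    Finset.prod_singleton, Finset.sum_singleton, hab, hac, hbc, or_self, not_false_iff,
    not_or]
  nlinarith [sq_nonneg (y a - y b), sq_nonneg (y b - y c), sq_nonneg (y a - y c),
    hy a, hy b, hy c, mul_nonneg (hy a) (hy b), mul_nonneg (hy b) (hy c),
    mul_nonneg (hy a) (hy c),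
    mul_nonneg (add_nonneg (add_nonneg (hy a) (hy b)) (hy c)) (sq_nonneg (y a - y b)),
    mul_nonneg (add_nonneg (add_nonneg (hy a) (hy b)) (hy c)) (sq_nonneg (y b - y c)),
    mul_nonneg (add_nonneg (add_nonneg (hy a) (hy b)) (hy c)) (sq_nonneg (y a - y c))]

lemma perA2 (A : Finset ℕ) (y : ℕ → ℝ) (hy : ∀ i, 0 ≤ y i) (hA : A.card = 3) :
    6 * ∏ i ∈ A, y i ≤ ∑ i ∈ A, ∑ j ∈ A.erase i, (y i)^2 * y j := by
  obtain ⟨a, b, c, hab, hac, hbc, rfl⟩ := Finset.card_eq_three.1 hA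
  have ea : ({a, b, c} : Finset ℕ).erase a = {b, c} := by
    ext x; simp only [Finset.mem_erase, Finset.mem_insert, Finset.mem_singleton]; omega
  have eb : ({a, b, c} : Finset ℕ).erase b = {a, c} := by
    ext x; simp only [Finset.mem_erase, Finset.mem_insert, Finset.mem_singleton]; omega
  have ec : ({a, b, c} : Finset ℕ).erase c = {a, b} := by
    ext x; simp only [Finset.mem_erase, Finset.mem_insert, Finset.mem_singleton]; omega
  rw [Finset.prod_insert (by simp [hab, hac]), Finset.prod_insert (by simp [hbc]),
    Finset.prod_singleton,
    Finset.sum_insert (by simp [hab, hac]), Finset.sum_insert (by simp [hbc]),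
    Finset.sum_singleton, ea, eb, ec,
    Finset.sum_insert (by simp [hbc]), Finset.sum_singleton,
    Finset.sum_insert (by simp [hac]), Finset.sum_singleton,
    Finset.sum_insert (by simp [hab]), Finset.sum_singleton]
  nlinarith [mul_nonneg (hy a) (sq_nonneg (y b - y c)),
    mul_nonneg (hy b) (sq_nonneg (y a - y c)),
    mul_nonneg (hy c) (sq_nonneg (y a - y b))]

lemma two_mul_choose_two (n : ℕ) : 2 * n.choose 2 = n * (n - 1) := by
  have h : 2 ∣ n * (n - 1) := by
    rcases n with _ | k
    · simp
    · rw [Nat.succ_sub_one, mul_comm]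
      exact (Nat.even_mul_succ_self k).two_dvd
  rw [Nat.choose_two_right, Nat.mul_div_cancel' h]

lemma core_ineq (S : Finset ℕ) (y : ℕ → ℝ) (hy : ∀ i, 0 ≤ y i) (hS : 3 ≤ S.card) :
    6 * (S.card : ℝ)^2 * ∑ A ∈ S.powersetCard 3, ∏ i ∈ A, y i
      ≤ ((S.card : ℝ) - 1) * ((S.card : ℝ) - 2) * (∑ i ∈ S, y i)^3 := by
  set M : ℝ := (S.card : ℝ) with hM
  have hM3 : (3 : ℝ) ≤ M := by rw [hM]; exact_mod_cast hS
  set E3 : ℝ := ∑ A ∈ S.powersetCard 3, ∏ i ∈ A, y i with hE3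
  set P3 : ℝ := ∑ i ∈ S, (y i)^3 with hP3
  set Q : ℝ := ∑ i ∈ S, (y i)^2 * ∑ j ∈ S.erase i, y j with hQ
  -- inequality 1 : 6 * E3 ≤ (M-1)*(M-2)*P3
  have h1 : 6 * E3 ≤ (M - 1) * (M - 2) * P3 := by
    have hsum : 3 * E3 ≤ ((S.card - 1).choose 2 : ℝ) * P3 := by
      rw [← swap1 S (fun i => (y i)^3), hE3, Finset.mul_sum]
      exact Finset.sum_le_sum fun A hA =>
        perA1 A y hy (Finset.mem_powersetCard.1 hA).2
    have e1 : ((S.card - 1 : ℕ) : ℝ) = M - 1 := by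
      rw [Nat.cast_sub (by omega : 1 ≤ S.card), Nat.cast_one, hM]
    have e2 : ((S.card - 1 - 1 : ℕ) : ℝ) = M - 2 := by
      rw [Nat.cast_sub (by omega : 1 ≤ S.card - 1), Nat.cast_sub (by omega : 1 ≤ S.card),
        Nat.cast_one, hM]
      ring
    have hcast : (2 : ℝ) * ((S.card - 1).choose 2 : ℝ) = (M - 1) * (M - 2) := by
      calc (2:ℝ) * ((S.card - 1).choose 2 : ℝ)
          = ((2 * (S.card - 1).choose 2 : ℕ) : ℝ) := by push_cast; ring
        _ = (((S.card - 1) * (S.card - 1 - 1) : ℕ) : ℝ) := by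
            rw [two_mul_choose_two (S.card - 1)]
        _ = (M - 1) * (M - 2) := by rw [Nat.cast_mul, e1, e2]
    calc 6 * E3 ≤ 2 * (((S.card - 1).choose 2 : ℝ) * P3) := by linarith
      _ = (2 * ((S.card - 1).choose 2 : ℝ)) * P3 := by ring
      _ = (M - 1) * (M - 2) * P3 := by rw [hcast]
  -- inequality 2 : 6 * E3 ≤ (M-2) * Q
  have h2 : 6 * E3 ≤ (M - 2) * Q := by
    have hsum : 6 * E3 ≤ ((S.card - 2 : ℕ) : ℝ) * Q := by
      rw [← swap2 S y, hE3, Finset.mul_sum]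
      exact Finset.sum_le_sum fun A hA =>
        perA2 A y hy (Finset.mem_powersetCard.1 hA).2
    have h3 : ((S.card - 2 : ℕ) : ℝ) = M - 2 := by
      rw [Nat.cast_sub (by omega : 2 ≤ S.card), hM]; push_cast; ring
    rw [h3] at hsum
    exact hsum
  have hid := cube_sum_id S y
  rw [← hE3, ← hP3, ← hQ] at hid
  have idm : (M-1)*(M-2)*(∑ i ∈ S, y i)^3
      = (M-1)*(M-2)*P3 + 3*((M-1)*(M-2))*Q + 6*((M-1)*(M-2))*E3 := by
    linear_combination ((M-1)*(M-2)) * hid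
  have h2' : 3*(M-1)*(6*E3) ≤ 3*(M-1)*((M-2)*Q) :=
    mul_le_mul_of_nonneg_left h2 (by linarith)
  nlinarith [h1, h2', idm]

lemma icc_split (n : ℕ) (hn : 4 ≤ n) :
    Finset.Icc 1 n = insert 1 (Finset.Icc 2 n) := by
  ext i
  simp only [Finset.mem_Icc, Finset.mem_insert]
  omega

lemma one_not_mem (n : ℕ) : 1 ∉ Finset.Icc 2 n := by simp

lemma star_factor (n : ℕ) (hn : 4 ≤ n) (x : ℕ → ℝ) :
    ∑ e ∈ starS n, ∏ i ∈ e, x i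
      = x 1 * ∑ A ∈ (Finset.Icc 2 n).powersetCard 3, ∏ i ∈ A, x i := by
  rw [Finset.mul_sum]
  refine Finset.sum_nbij' (fun e => e.erase 1) (fun A => insert 1 A) ?_ ?_ ?_ ?_ ?_
  · intro e he
    simp only [starS, Finset.mem_filter, Finset.mem_powersetCard] at he
    obtain ⟨⟨hsub, hcard⟩, h1e⟩ := he
    rw [Finset.mem_powersetCard]
    constructor
    · intro j hj
      have h1 := Finset.mem_erase.1 hj
      have h2 := hsub h1.2
      simp only [Finset.mem_Icc] at h2 ⊢
      omega
    · rw [Finset.card_erase_of_mem h1e, hcard]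
  · intro A hA
    rw [Finset.mem_powersetCard] at hA
    have h1A : 1 ∉ A := fun h => by
      have := hA.1 h; simp only [Finset.mem_Icc] at this; omega
    simp only [starS, Finset.mem_filter, Finset.mem_powersetCard]
    refine ⟨⟨?_, ?_⟩, Finset.mem_insert_self _ _⟩
    · refine Finset.insert_subset ?_ ?_
      · simp only [Finset.mem_Icc]; omega
      · refine hA.1.trans ?_
        intro j hj
        simp only [Finset.mem_Icc] at hj ⊢
        omega
    · rw [Finset.card_insert_of_notMem h1A, hA.2]
  · intro e he
    simp only [starS, Finset.mem_filter] at he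
    exact Finset.insert_erase he.2
  · intro A hA
    rw [Finset.mem_powersetCard] at hA
    exact Finset.erase_insert (fun h => by
      have := hA.1 h; simp only [Finset.mem_Icc] at this; omega)
  · intro e he
    simp only [starS, Finset.mem_filter] at he
    exact (Finset.mul_prod_erase e x he.2).symm

lemma cube_max (s : ℝ) (h0 : 0 ≤ s) (h1 : s ≤ 1) : (1 - s) * s^3 ≤ 27/256 := by
  nlinarith [sq_nonneg (4*s - 3), sq_nonneg (4*s + 1),
    mul_nonneg (sq_nonneg (4*s - 3)) (sq_nonneg (4*s + 1))]

lemma star_upper (n : ℕ) (hn : 4 ≤ n) (x : ℕ → ℝ) (hx : ∀ i, 0 ≤ x i)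
    (hsum : ∑ i ∈ Finset.Icc 1 n, x i = 1) :
    ∑ e ∈ starS n, ∏ i ∈ e, x i
      ≤ 9 * ((n : ℝ) - 2) * ((n : ℝ) - 3) / (512 * ((n : ℝ) - 1) ^ 2) := by
  have hN : (4 : ℝ) ≤ (n : ℝ) := by exact_mod_cast hn
  rw [star_factor n hn x]
  set E3 : ℝ := ∑ A ∈ (Finset.Icc 2 n).powersetCard 3, ∏ i ∈ A, x i with hE3def
  set s : ℝ := ∑ i ∈ Finset.Icc 2 n, x i with hsdef
  have hcard : (Finset.Icc 2 n).card = n - 1 := by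
    rw [Nat.card_Icc]; omega
  have hccast : ((Finset.Icc 2 n).card : ℝ) = (n : ℝ) - 1 := by
    rw [hcard, Nat.cast_sub (by omega : 1 ≤ n), Nat.cast_one]
  have hcore := core_ineq (Finset.Icc 2 n) x hx (by rw [hcard]; omega)
  rw [hccast, ← hE3def, ← hsdef] at hcore
  have hcore2 : 6 * ((n:ℝ)-1)^2 * E3 ≤ ((n:ℝ)-2) * ((n:ℝ)-3) * s^3 := by linarith [hcore]
  have hsum' : x 1 + s = 1 := by
    rw [icc_split n hn, Finset.sum_insert (one_not_mem n)] at hsum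
    exact hsum
  have hs0 : 0 ≤ s := Finset.sum_nonneg fun i _ => hx i
  have hx1 : 0 ≤ x 1 := hx 1
  have hs1 : s ≤ 1 := by linarith
  have hE3 : 0 ≤ E3 := Finset.sum_nonneg fun A _ => Finset.prod_nonneg fun i _ => hx i
  have key := cube_max s hs0 hs1
  rw [le_div_iff₀ (by nlinarith : (0:ℝ) < 512 * ((n : ℝ) - 1) ^ 2)]
  have step1 : x 1 * (6 * ((n:ℝ)-1)^2 * E3) ≤ x 1 * (((n:ℝ)-2) * ((n:ℝ)-3) * s^3) :=
    mul_le_mul_of_nonneg_left hcore2 hx1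
  have hx1eq : x 1 = 1 - s := by linarith
  have step2 : x 1 * (((n:ℝ)-2) * ((n:ℝ)-3) * s^3)
      = ((n:ℝ)-2) * ((n:ℝ)-3) * ((1-s) * s^3) := by rw [hx1eq]; ring
  have hfac : (0:ℝ) ≤ ((n:ℝ)-2) * ((n:ℝ)-3) := by nlinarith
  have step3 : ((n:ℝ)-2) * ((n:ℝ)-3) * ((1-s) * s^3)
      ≤ ((n:ℝ)-2) * ((n:ℝ)-3) * (27/256) := mul_le_mul_of_nonneg_left key hfac
  nlinarith [step1, step2, step3]

lemma star_attained (n : ℕ) (hn : 4 ≤ n) :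
    ∃ x : ℕ → ℝ, (∀ i, 0 ≤ x i) ∧ (∑ i ∈ Finset.Icc 1 n, x i) = 1 ∧
      ∑ e ∈ starS n, ∏ i ∈ e, x i
        = 9 * ((n : ℝ) - 2) * ((n : ℝ) - 3) / (512 * ((n : ℝ) - 1) ^ 2) := by
  have hN : (4 : ℝ) ≤ (n : ℝ) := by exact_mod_cast hn
  have hNpos : (0 : ℝ) < (n : ℝ) - 1 := by linarith
  set c : ℝ := 3 / (4 * ((n : ℝ) - 1)) with hc
  have hcpos : 0 < c := by positivity
  refine ⟨fun i => if i = 1 then 1/4 else if i ∈ Finset.Icc 2 n then c else 0, ?_, ?_, ?_⟩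
  · intro i
    dsimp only
    split_ifs
    · norm_num
    · exact le_of_lt hcpos
    · exact le_refl 0
  · rw [icc_split n hn, Finset.sum_insert (one_not_mem n)]
    have h1 : (if (1:ℕ) = 1 then (1:ℝ)/4 else if (1:ℕ) ∈ Finset.Icc 2 n then c else 0) = 1/4 := by
      simp
    rw [h1]
    have h2 : ∑ i ∈ Finset.Icc 2 n,
        (fun i => if i = 1 then (1:ℝ)/4 else if i ∈ Finset.Icc 2 n then c else 0) i
        = ∑ i ∈ Finset.Icc 2 n, c := by
      refine Finset.sum_congr rfl fun i hi => ?_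
      have hi1 : i ≠ 1 := by
        have := Finset.mem_Icc.1 hi; omega
      simp only [hi1, if_false, hi, if_true]
    rw [h2, Finset.sum_const, Nat.card_Icc]
    have h3 : ((n + 1 - 2 : ℕ) : ℝ) = (n : ℝ) - 1 := by
      rw [Nat.cast_sub (by omega : 2 ≤ n + 1)]; push_cast; ring
    rw [nsmul_eq_mul, h3, hc]
    field_simp
    ring
  · set x : ℕ → ℝ := fun i => if i = 1 then 1/4 else if i ∈ Finset.Icc 2 n then c else 0 with hxdef
    have hval : ∀ i ∈ Finset.Icc 2 n, x i = c := by
      intro i hi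
      have hi1 : i ≠ 1 := by have := Finset.mem_Icc.1 hi; omega
      simp only [hxdef, hi1, if_false, hi, if_true]
    have hx1 : x 1 = 1/4 := by simp [hxdef]
    have hcard : ((Finset.Icc 2 n).card : ℝ) = (n : ℝ) - 1 := by
      rw [Nat.card_Icc, Nat.cast_sub (by omega : 2 ≤ n + 1)]; push_cast; ring
    have hs : ∑ i ∈ Finset.Icc 2 n, x i = ((n:ℝ) - 1) * c := by
      rw [Finset.sum_congr rfl hval, Finset.sum_const, nsmul_eq_mul, hcard]
    have hP3 : ∑ i ∈ Finset.Icc 2 n, (x i)^3 = ((n:ℝ) - 1) * c^3 := by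
      rw [Finset.sum_congr rfl (fun i hi => by rw [hval i hi]), Finset.sum_const,
        nsmul_eq_mul, hcard]
    have hQ : ∑ i ∈ Finset.Icc 2 n, (x i)^2 * ∑ j ∈ (Finset.Icc 2 n).erase i, x j
        = ((n:ℝ) - 1) * (((n:ℝ) - 2) * c^3) := by
      have hinner : ∀ i ∈ Finset.Icc 2 n,
          (x i)^2 * ∑ j ∈ (Finset.Icc 2 n).erase i, x j = c^2 * (((n:ℝ) - 2) * c) := by
        intro i hi
        rw [hval i hi]
        congr 1
        rw [Finset.sum_congr rfl (fun j hj => hval j (Finset.mem_of_mem_erase hj)),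
          Finset.sum_const, nsmul_eq_mul, Finset.card_erase_of_mem hi]
        congr 1
        rw [Nat.cast_sub (by rw [Nat.card_Icc]; omega : 1 ≤ (Finset.Icc 2 n).card), hcard,
          Nat.cast_one]
        ring
      rw [Finset.sum_congr rfl hinner, Finset.sum_const, nsmul_eq_mul, hcard]
      ring
    have hid := cube_sum_id (Finset.Icc 2 n) x
    rw [hs, hP3, hQ] at hid
    have hE3 : ∑ A ∈ (Finset.Icc 2 n).powersetCard 3, ∏ i ∈ A, x i
        = ((n:ℝ) - 1) * ((n:ℝ) - 2) * ((n:ℝ) - 3) * c^3 / 6 := by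
      linear_combination (-1/6 : ℝ) * hid
    rw [star_factor n hn x, hx1, hE3, hc]
    field_simp
    ring

/-- For every `n ≥ 4`, `λ(S_n) = 9(n-2)(n-3)/(512(n-1)²)`, and `λ(S_n) → 9/512`
as `n → ∞`. -/
theorem lagrangian_star :
    (∀ n : ℕ, 4 ≤ n →
      lagN n (starS n) =
        9 * ((n : ℝ) - 2) * ((n : ℝ) - 3) / (512 * ((n : ℝ) - 1) ^ 2)) ∧
    Filter.Tendsto (fun n : ℕ => lagN n (starS n)) Filter.atTop (nhds (9 / 512)) := by
  have partA : ∀ n : ℕ, 4 ≤ n →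
      lagN n (starS n) =
        9 * ((n : ℝ) - 2) * ((n : ℝ) - 3) / (512 * ((n : ℝ) - 1) ^ 2) := by
    intro n hn
    obtain ⟨x, hx, hsum, hval⟩ := star_attained n hn
    unfold lagN
    apply le_antisymm
    · refine csSup_le ⟨∑ e ∈ starS n, ∏ i ∈ e, x i, ⟨x, hx, hsum, rfl⟩⟩ ?_
      rintro v ⟨y, hy, hysum, rfl⟩
      exact star_upper n hn y hy hysum
    · refine le_csSup ⟨9 * ((n:ℝ) - 2) * ((n:ℝ) - 3) / (512 * ((n:ℝ) - 1) ^ 2), ?_⟩ ⟨x, hx, hsum, hval.symm⟩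
      rintro v ⟨y, hy, hysum, rfl⟩
      exact star_upper n hn y hy hysum
  refine ⟨partA, ?_⟩
  have h1 : Filter.Tendsto (fun n : ℕ => ((n:ℝ) - 1)) Filter.atTop Filter.atTop :=
    Filter.tendsto_atTop_add_const_right _ (-1) tendsto_natCast_atTop_atTop
  have h0 : Filter.Tendsto (fun n : ℕ => ((n:ℝ) - 1)⁻¹) Filter.atTop (nhds 0) :=
    h1.inv_tendsto_atTop
  have h2 : Filter.Tendsto
      (fun n : ℕ => 9/512 * ((1 - ((n:ℝ)-1)⁻¹) * (1 - 2*((n:ℝ)-1)⁻¹)))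
      Filter.atTop (nhds ((9:ℝ)/512 * ((1 - 0) * (1 - 2*0)))) :=
    tendsto_const_nhds.mul ((tendsto_const_nhds.sub h0).mul
      (tendsto_const_nhds.sub (h0.const_mul 2)))
  have h3 : (9/512 : ℝ) * ((1 - 0) * (1 - 2*0)) = 9/512 := by norm_num
  rw [h3] at h2
  have heq : (fun n : ℕ => 9/512 * ((1 - ((n:ℝ)-1)⁻¹) * (1 - 2*((n:ℝ)-1)⁻¹)))
      =ᶠ[Filter.atTop] (fun n : ℕ => lagN n (starS n)) := by
    filter_upwards [Filter.eventually_ge_atTop 4] with n hn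
    rw [partA n hn]
    have hN : (4:ℝ) ≤ (n:ℝ) := by exact_mod_cast hn
    have hNpos : (0:ℝ) < (n:ℝ) - 1 := by linarith
    field_simp
    ring
  exact Filter.Tendsto.congr' heq h2
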